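/- For an empirical distribution F with m equally weighted atoms y_1,...,y_m and a real outcome y, the integral ∫(F(t) - 1[t ≥ y])² dt equals (1/m)·Σᵢ|yᵢ - y| - (1/(2m²))·Σᵢ Σⱼ |yᵢ - yⱼ|. -/

import Mathlib

open MeasureTheory Finset

noncomputable def χ (a : ℝ) (t : ℝ) : ℝ := if a ≤ t then 1 else 0

lemma chi_sub_sq (a b t : ℝ) :
    (χ a t - χ b t) ^ 2
      = Set.indicator (Set.Ico (min a b) (max a b)) (fun _ => (1:ℝ)) t := by
  unfold χ
  rcases le_total a b with h | h <;>
    by_cases h1 : a ≤ t <;> by_cases h2 : b ≤ t <;>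
      simp [Set.indicator_apply, Set.mem_Ico, *] <;>
        (try simp [not_le.mp ‹_›]) <;>
        first
          | (intro; linarith)
          | (constructor <;> linarith)
          | linarith

lemma integrable_chi_sub_sq (a b : ℝ) :
    Integrable (fun t => (χ a t - χ b t) ^ 2) := by
  simp_rw [chi_sub_sq]
  exact (integrable_indicator_iff measurableSet_Ico).2
    (integrableOn_const measure_Ico_lt_top.ne)

lemma integral_chi_sub_sq (a b : ℝ) :
    ∫ t, (χ a t - χ b t) ^ 2 = |a - b| := by
  simp_rw [chi_sub_sq]
  rw [integral_indicator_const (1:ℝ) measurableSet_Ico, measureReal_def, Real.volume_Ico,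
    ENNReal.toReal_ofReal (by simp [min_le_max] : (0:ℝ) ≤ max a b - min a b)]
  rw [max_sub_min_eq_abs]
  simp [abs_sub_comm]

lemma prod_eq (a b c t : ℝ) :
    (χ a t - χ c t) * (χ b t - χ c t)
      = ((χ a t - χ c t) ^ 2 + (χ b t - χ c t) ^ 2 - (χ a t - χ b t) ^ 2) / 2 := by
  ring_nf

lemma prod_eq' (a b c : ℝ) :
    (fun t => (χ a t - χ c t) * (χ b t - χ c t))
      = fun t => ((χ a t - χ c t) ^ 2 + (χ b t - χ c t) ^ 2 - (χ a t - χ b t) ^ 2) / 2 := by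
  funext t
  have : χ a t - χ b t = (χ a t - χ c t) - (χ b t - χ c t) := by ring
  rw [this]; ring

lemma integrable_prod (a b c : ℝ) :
    Integrable (fun t => (χ a t - χ c t) * (χ b t - χ c t)) := by
  rw [prod_eq']
  exact (((integrable_chi_sub_sq a c).add (integrable_chi_sub_sq b c)).sub
    (integrable_chi_sub_sq a b)).div_const 2

lemma integral_prod (a b c : ℝ) :
    ∫ t, (χ a t - χ c t) * (χ b t - χ c t) = (|a - c| + |b - c| - |a - b|) / 2 := by
  have hac := integrable_chi_sub_sq a c
  have hbc := integrable_chi_sub_sq b c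
  have hab := integrable_chi_sub_sq a b
  have key : ∫ t, ((χ a t - χ c t) ^ 2 + (χ b t - χ c t) ^ 2 - (χ a t - χ b t) ^ 2)
      = |a - c| + |b - c| - |a - b| := by
    have hsum : Integrable (fun t => (χ a t - χ c t) ^ 2 + (χ b t - χ c t) ^ 2) := hac.add hbc
    rw [integral_sub hsum hab, integral_add hac hbc,
      integral_chi_sub_sq, integral_chi_sub_sq, integral_chi_sub_sq]
  rw [prod_eq', integral_div, key]


set_option linter.unreachableTactic false
set_option linter.unusedTactic false

/-- For the empirical CDF `F` of `m` equally weighted atoms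
`y 0, ..., y (m-1)` and a real outcome `y₀`, the integral
`∫ (F t - 1[t ≥ y₀])² dt` equals
`(1/m)·Σᵢ |y i - y₀| - (1/(2m²))·Σᵢ Σⱼ |y i - y j|`. -/
theorem crps_empirical_integral (m : ℕ) (hm : 1 ≤ m) (y : Fin m → ℝ) (y₀ : ℝ) :
    ∫ t : ℝ,
        (((univ.filter (fun i : Fin m => y i ≤ t)).card : ℝ) / m
          - (if y₀ ≤ t then (1 : ℝ) else 0)) ^ 2
      = (1 / m) * ∑ i, |y i - y₀|
        - (1 / (2 * (m : ℝ) ^ 2)) * ∑ i, ∑ j, |y i - y j| := by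
  have hm0 : (m : ℝ) ≠ 0 := Nat.cast_ne_zero.2 (by omega)
  have hint : ∀ t : ℝ,
      (((univ.filter (fun i : Fin m => y i ≤ t)).card : ℝ) / m
          - (if y₀ ≤ t then (1 : ℝ) else 0)) ^ 2
        = (1 / (m:ℝ)^2) * ∑ i : Fin m, ∑ j : Fin m,
            (χ (y i) t - χ y₀ t) * (χ (y j) t - χ y₀ t) := by
    intro t
    have hcard : ((univ.filter (fun i : Fin m => y i ≤ t)).card : ℝ)
        = ∑ i : Fin m, χ (y i) t := by
      rw [Finset.card_filter]
      push_cast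
      simp [χ]
    have hsum : ∑ i : Fin m, ∑ j : Fin m,
          (χ (y i) t - χ y₀ t) * (χ (y j) t - χ y₀ t)
        = (∑ i : Fin m, (χ (y i) t - χ y₀ t)) ^ 2 := by
      rw [sq, Finset.sum_mul_sum]
    rw [hcard, hsum, Finset.sum_sub_distrib, Finset.sum_const, Finset.card_univ,
      Fintype.card_fin]
    unfold χ
    field_simp
    rw [nsmul_eq_mul]
  simp_rw [hint]
  rw [MeasureTheory.integral_const_mul]
  rw [integral_finset_sum _ (fun i _ => integrable_finset_sum _
    (fun j _ => integrable_prod (y i) (y j) y₀))]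
  simp_rw [integral_finset_sum _ (fun j _ => integrable_prod _ (y j) y₀),
    integral_prod]
  have expand : ∑ i : Fin m, ∑ j : Fin m,
        (|y i - y₀| + |y j - y₀| - |y i - y j|) / 2
      = ((m:ℝ) * ∑ i, |y i - y₀| + (m:ℝ) * ∑ j, |y j - y₀|
          - ∑ i, ∑ j, |y i - y j|) / 2 := by
    simp_rw [← Finset.sum_div]
    congr 1
    simp_rw [Finset.sum_sub_distrib, Finset.sum_add_distrib, Finset.sum_const,
      Finset.card_univ, Fintype.card_fin, nsmul_eq_mul, ← Finset.mul_sum]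
  rw [expand]
  field_simp
  ring
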